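/- Let X be a real reflexive Banach space and T : X → X* a monotone, coercive, bounded, and hemicontinuous operator. Then for every b ∈ X* there exists u ∈ X with T(u) = b; moreover if T is strictly monotone, the solution is unique. -/

import Mathlib

open scoped RealInnerProductSpace
open Module Submodule

open scoped RealInnerProductSpace
open Module Submodule

lemma projNorm_le {E : Type} [NormedAddCommGroup E] [InnerProductSpace ℝ E]
    (V : Submodule ℝ E) [HasOrthogonalProjection V] (w : E) :
    ‖(orthogonalProjection V w : V)‖ ≤ ‖w‖ := by
  refine ((orthogonalProjection V).le_opNorm w).trans ?_
  have := orthogonalProjection_norm_le V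
  nlinarith [norm_nonneg w]

set_option maxHeartbeats 2000000 in
theorem strongMono_surj : ∀ (n : ℕ) (E : Type) [NormedAddCommGroup E]
    [InnerProductSpace ℝ E] [FiniteDimensional ℝ E], finrank ℝ E = n →
    ∀ g : E → E, Continuous g → (∀ x y : E, ‖x - y‖ ^ 2 ≤ ⟪g x - g y, x - y⟫) →
    Function.Surjective g := by
  intro n
  induction n with
  | zero =>
    intro E _ _ _ hrk g _ _ b
    have : Subsingleton E := finrank_zero_iff.mp hrk
    exact ⟨b, Subsingleton.elim _ _⟩
  | succ n ih =>
    intro E _ _ _ hrk g hgc hgm b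
    have hne : Nontrivial E := by
      have : 0 < finrank ℝ E := by omega
      exact Module.nontrivial_of_finrank_pos this
    obtain ⟨e, he⟩ := exists_norm_eq E (by norm_num : (0:ℝ) ≤ 1)
    have hene : e ≠ 0 := by intro h; rw [h] at he; simp at he
    set V : Submodule ℝ E := (Submodule.span ℝ {e})ᗮ with hV
    have hrkV : finrank ℝ V = n := by
      have h1 : finrank ℝ (Submodule.span ℝ {e} : Submodule ℝ E) = 1 :=
        finrank_span_singleton hene
      have h2 := Submodule.finrank_add_finrank_orthogonal
        (K := (Submodule.span ℝ {e} : Submodule ℝ E))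
      rw [hV]; omega
    have hPinner : ∀ (w : E) (u : V), ⟪orthogonalProjection V w, u⟫ = ⟪w, (u : E)⟫ :=
      fun w u => inner_orthogonalProjection_eq_of_mem_right (K := V) u w
    have hVe : ∀ w : V, ⟪(w : E), e⟫ = 0 := by
      intro w
      have hw : (w : E) ∈ (Submodule.span ℝ {e})ᗮ := w.2
      have := (Submodule.mem_orthogonal _ _).mp hw e (Submodule.mem_span_singleton_self e)
      rwa [real_inner_comm] at this
    set gV : ℝ → V → V := fun t v => orthogonalProjection V (g ((v : E) + t • e)) with hgV
    have hgVm : ∀ t : ℝ, ∀ v v' : V, ‖v - v'‖ ^ 2 ≤ ⟪gV t v - gV t v', v - v'⟫ := by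
      intro t v v'
      have h1 : ⟪gV t v - gV t v', v - v'⟫
          = ⟪g ((v : E) + t • e) - g ((v' : E) + t • e), (v : E) - (v' : E)⟫ := by
        rw [inner_sub_left, hPinner, hPinner, ← inner_sub_left]
        congr 1
        all_goals push_cast
        all_goals try abel
      have h2 := hgm ((v : E) + t • e) ((v' : E) + t • e)
      have h3 : ((v : E) + t • e) - ((v' : E) + t • e) = (v : E) - (v' : E) := by abel
      rw [h3] at h2
      have h4 : ‖v - v'‖ = ‖(v : E) - (v' : E)‖ := by rw [← Submodule.coe_sub]; rfl
      rw [h1, h4]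
      exact h2
    have hsolve : ∀ t : ℝ, ∃ v : V, gV t v = orthogonalProjection V b := by
      intro t
      have hc : Continuous (gV t) := by
        apply (orthogonalProjection V).continuous.comp
        exact hgc.comp (by continuity)
      exact ih V hrkV (gV t) hc (hgVm t) _
    choose vf hvf using hsolve
    set φ : ℝ → ℝ := fun t => ⟪g ((vf t : E) + t • e), e⟫ with hφ
    -- key inequality
    have key : ∀ t s : ℝ, ‖(vf t : E) - (vf s : E)‖ ^ 2 + (t - s) ^ 2
        ≤ (t - s) * (φ t - φ s) := by
      intro t s
      set xt := (vf t : E) + t • e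
      set xs := (vf s : E) + s • e
      have hdec : xt - xs = ((vf t : E) - (vf s : E)) + (t - s) • e := by
        simp only [xt, xs, sub_smul]; abel
      have hnorm : ‖xt - xs‖ ^ 2 = ‖(vf t : E) - (vf s : E)‖ ^ 2 + (t - s) ^ 2 := by
        rw [hdec]
        rw [norm_add_sq_real]
        have h0 : ⟪(vf t : E) - (vf s : E), (t - s) • e⟫ = 0 := by
          rw [inner_smul_right]
          have : ((vf t - vf s : V) : E) = (vf t : E) - (vf s : E) := by push_cast; try ring
          rw [← this, hVe]
          ring
        rw [h0, norm_smul, he]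
        simp [sq_abs]
        try ring
      have hmono2 := hgm xt xs
      rw [hnorm] at hmono2
      have hrhs : ⟪g xt - g xs, xt - xs⟫ = (t - s) * (φ t - φ s) := by
        rw [hdec, inner_add_right, inner_smul_right]
        have hfirst : ⟪g xt - g xs, (vf t : E) - (vf s : E)⟫ = 0 := by
          have : ((vf t - vf s : V) : E) = (vf t : E) - (vf s : E) := by push_cast; try ring
          rw [← this]
          have h1 : ⟪g xt - g xs, ((vf t - vf s : V) : E)⟫
              = ⟪orthogonalProjection V (g xt) - orthogonalProjection V (g xs), vf t - vf s⟫ := by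
            rw [inner_sub_left, inner_sub_left, hPinner, hPinner]
          rw [h1]
          have h2 : orthogonalProjection V (g xt) = gV t (vf t) := rfl
          have h3 : orthogonalProjection V (g xs) = gV s (vf s) := rfl
          rw [h2, h3, hvf, hvf, sub_self, inner_zero_left]
        rw [hfirst, zero_add]
        have : ⟪g xt - g xs, e⟫ = φ t - φ s := by
          rw [inner_sub_left]
        rw [this]
      rw [hrhs] at hmono2
      exact hmono2
    -- bound on vf, locally uniform
    have hbound : ∀ t : ℝ, ‖(vf t : E)‖ ≤ ‖((orthogonalProjection V b : V) : E)‖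
        + ‖g (t • e)‖ := by
      intro t
      have h := hgVm t (vf t) 0
      rw [sub_zero, hvf t] at h
      have hv0 : gV t 0 = orthogonalProjection V (g (t • e)) := by
        simp only [hgV, Submodule.coe_zero, zero_add]
      have h2 : ⟪(orthogonalProjection V b : V) - gV t 0, vf t⟫
          ≤ ‖((orthogonalProjection V b : V) - gV t 0 : V)‖ * ‖vf t‖ :=
        real_inner_le_norm _ _
      have h3 : ‖((orthogonalProjection V b : V) - gV t 0 : V)‖
          ≤ ‖((orthogonalProjection V b : V) : E)‖ + ‖g (t • e)‖ := by
        refine (norm_sub_le _ _).trans ?_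
        gcongr
        · rfl
        · rw [hv0]
          exact projNorm_le V (g (t • e))
      have hnv : ‖vf t‖ = ‖(vf t : E)‖ := rfl
      have haux : ∀ x A q0 : ℝ, 0 ≤ x → 0 ≤ A → x ^ 2 ≤ q0 * x → q0 ≤ A → x ≤ A := by
        intro x A q0 hx hA h1' h2'
        nlinarith
      rw [← hnv]
      refine haux _ _ ‖((orthogonalProjection V b : V) - gV t 0 : V)‖ (norm_nonneg _)
        (by positivity) (h.trans h2) h3
    -- continuity of t ↦ vf t
    have hvfc : Continuous (fun t : ℝ => ((vf t : E))) := by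
      rw [continuous_iff_continuousAt]
      intro t₀
      -- local bound on vf
      have hρ : Continuous (fun t : ℝ => ‖((orthogonalProjection V b : V) : E)‖ + ‖g (t • e)‖) := by
        continuity
      obtain ⟨C, hC⟩ := (isCompact_Icc (a := t₀ - 1) (b := t₀ + 1)).exists_bound_of_continuousOn
        (hρ.continuousOn (s := Set.Icc (t₀-1) (t₀+1)))
      have hvb : ∀ t ∈ Set.Icc (t₀ - 1) (t₀ + 1), ‖(vf t : E)‖ ≤ C := by
        intro t ht
        refine (hbound t).trans ?_
        have := hC t ht
        rw [Real.norm_eq_abs] at this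
        exact (le_abs_self _).trans this
      have hCnn : 0 ≤ C := (norm_nonneg _).trans (hvb t₀ (by constructor <;> linarith))
      set C' : ℝ := C + |t₀| + 1 with hC'
      have hxb : ∀ t ∈ Set.Icc (t₀ - 1) (t₀ + 1), ((vf t : E) + t • e) ∈ Metric.closedBall (0:E) C' := by
        intro t ht
        rw [Metric.mem_closedBall, dist_zero_right]
        refine (norm_add_le _ _).trans ?_
        rw [norm_smul, he, Real.norm_eq_abs]
        have h1 := hvb t ht
        have h2 : |t| ≤ |t₀| + 1 := by
          cases' ht with h3 h4
          rw [abs_le]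
          cases' (abs_le.mp (le_refl |t₀|)).imp id id with _ _
          constructor <;> [linarith [neg_abs_le t₀]; linarith [le_abs_self t₀]]
        simp only [hC']
        linarith
      obtain ⟨M, hM⟩ := (ProperSpace.isCompact_closedBall (0:E) C').exists_bound_of_continuousOn
        (hgc.continuousOn (s := Metric.closedBall (0:E) C'))
      have hMnn : 0 ≤ M :=
        (norm_nonneg _).trans (hM ((vf t₀ : E) + t₀ • e) (hxb t₀ (by constructor <;> linarith)))
      have hM' : ∀ t ∈ Set.Icc (t₀-1) (t₀+1), ‖g ((vf t : E) + t • e)‖ ≤ M := by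
        intro t ht
        exact hM _ (hxb t ht)
      -- quantitative estimate
      have hest : ∀ t ∈ Set.Icc (t₀-1) (t₀+1), ‖(vf t : E) - (vf t₀ : E)‖ ^ 2 ≤ 2 * M * |t - t₀| := by
        intro t ht
        have hk := key t t₀
        have hφd : (t - t₀) * (φ t - φ t₀) ≤ 2 * M * |t - t₀| := by
          have h1 : φ t - φ t₀ = ⟪g ((vf t : E) + t • e) - g ((vf t₀ : E) + t₀ • e), e⟫ := by
            rw [inner_sub_left]
          have h2 : |φ t - φ t₀| ≤ 2 * M := by
            rw [h1]
            refine (abs_real_inner_le_norm _ _).trans ?_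
            rw [he, mul_one]
            refine (norm_sub_le _ _).trans ?_
            have := hM' t ht
            have := hM' t₀ (by constructor <;> linarith)
            linarith
          calc (t - t₀) * (φ t - φ t₀) ≤ |(t - t₀) * (φ t - φ t₀)| := le_abs_self _
            _ = |t - t₀| * |φ t - φ t₀| := abs_mul _ _
            _ ≤ |t - t₀| * (2 * M) := by
                refine mul_le_mul_of_nonneg_left h2 (abs_nonneg _)
            _ = 2 * M * |t - t₀| := by ring
        nlinarith [sq_nonneg (t - t₀)]
      rw [Metric.continuousAt_iff]
      intro ε hε
      refine ⟨min 1 (ε ^ 2 / (2 * M + 1)), lt_min one_pos (by positivity), ?_⟩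
      intro s hs
      rw [Real.dist_eq] at hs
      have hs1 : |s - t₀| < 1 := lt_of_lt_of_le hs (min_le_left _ _)
      have hs2 : |s - t₀| < ε ^ 2 / (2 * M + 1) := lt_of_lt_of_le hs (min_le_right _ _)
      have hsI : s ∈ Set.Icc (t₀-1) (t₀+1) := by
        cases' abs_lt.mp hs1 with h1 h2
        constructor <;> linarith
      have h3 := hest s hsI
      rw [dist_eq_norm]
      have h4 : ‖(vf s : E) - (vf t₀ : E)‖ ^ 2 < ε ^ 2 := by
        refine lt_of_le_of_lt h3 ?_
        calc 2 * M * |s - t₀| ≤ (2 * M + 1) * |s - t₀| := by nlinarith [abs_nonneg (s - t₀)]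
          _ < (2 * M + 1) * (ε ^ 2 / (2 * M + 1)) := by
              refine mul_lt_mul_of_pos_left hs2 (by linarith)
          _ = ε ^ 2 := by field_simp
      nlinarith [norm_nonneg ((vf s : E) - (vf t₀ : E))]
    -- continuity of φ
    have hφc : Continuous φ := by
      apply Continuous.inner
      · exact hgc.comp (hvfc.add (by continuity))
      · exact continuous_const
    -- φ is strongly monotone
    have hφm : ∀ s t : ℝ, s ≤ t → φ s - φ t ≤ s - t := by
      intro s t hst
      rcases eq_or_lt_of_le hst with h | h
      · rw [h]; simp
      · have hk := key t s
        have h2 : (t - s) ^ 2 ≤ (t - s) * (φ t - φ s) := by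
          nlinarith [sq_nonneg ‖(vf t : E) - (vf s : E)‖]
        have hpos : 0 < t - s := by linarith
        nlinarith
    -- IVT
    obtain ⟨t, ht⟩ : ∃ t : ℝ, φ t = ⟪b, e⟫ := by
      set β : ℝ := ⟪b, e⟫ with hβ
      set a : ℝ := β - φ 0 with ha
      have h1 : φ (-|a|) ≤ β := by
        have h2 := hφm (-|a|) 0 (neg_nonpos_of_nonneg (abs_nonneg a))
        have := neg_abs_le a
        simp only [ha] at *
        linarith
      have h2 : β ≤ φ |a| := by
        have h3 := hφm 0 |a| (abs_nonneg a)
        have := le_abs_self a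
        simp only [ha] at *
        linarith
      have hivt := intermediate_value_Icc (neg_le_self (abs_nonneg a)) (hφc.continuousOn)
      have hβmem : β ∈ Set.Icc (φ (-|a|)) (φ |a|) := ⟨h1, h2⟩
      obtain ⟨t, _, ht⟩ := hivt hβmem
      exact ⟨t, ht⟩
    -- conclusion
    refine ⟨(vf t : E) + t • e, ?_⟩
    set z : E := g ((vf t : E) + t • e) - b with hz
    have hPz : orthogonalProjection V z = 0 := by
      simp only [hz, map_sub]
      have h2 : orthogonalProjection V (g ((vf t : E) + t • e)) = gV t (vf t) := rfl
      rw [h2, hvf, sub_self]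
    have hze : ⟪z, e⟫ = 0 := by
      simp only [hz, inner_sub_left]
      rw [show (inner ℝ (g ((vf t : E) + t • e)) e : ℝ) = φ t from rfl, ht, sub_self]
    have hz0 : z = 0 := by
      have hdec : ((orthogonalProjection (Submodule.span ℝ {e}) z : Submodule.span ℝ {e}) : E) + ((orthogonalProjection (Submodule.span ℝ {e})ᗮ z : (Submodule.span ℝ {e})ᗮ) : E) = z :=
        (Submodule.span ℝ {e}).starProjection_add_starProjection_orthogonal z
      have h1 : ((orthogonalProjection (Submodule.span ℝ {e}) z : Submodule.span ℝ {e}) : E) = 0 := by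
        rw [show ((orthogonalProjection (Submodule.span ℝ {e}) z : Submodule.span ℝ {e}) : E) = (Submodule.span ℝ {e}).starProjection z from rfl, starProjection_singleton]
        have h2 : ⟪e, z⟫ = 0 := by rw [real_inner_comm]; exact hze
        rw [h2]
        simp
      have h3 : ((orthogonalProjection (Submodule.span ℝ {e})ᗮ z : (Submodule.span ℝ {e})ᗮ) : E) = 0 := by
        have h4 : orthogonalProjection (Submodule.span ℝ {e})ᗮ z = 0 := hPz
        rw [h4]
        simp
      rw [← hdec, h1, h3, add_zero]
    have : g ((vf t : E) + t • e) = b := by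
      have := sub_eq_zero.mp hz0
      exact this
    exact this


theorem monoCoercive_zero (E : Type) [NormedAddCommGroup E]
    [InnerProductSpace ℝ E] [FiniteDimensional ℝ E]
    (g : E → E) (hc : Continuous g) (hm : ∀ x y : E, 0 ≤ ⟪g x - g y, x - y⟫)
    (hcoer : ∃ R : ℝ, ∀ x : E, R ≤ ‖x‖ → 0 ≤ ⟪g x, x⟫) : ∃ x : E, g x = 0 := by
  obtain ⟨R, hR⟩ := hcoer
  -- solve perturbed equations
  have hsol : ∀ k : ℕ, ∃ x : E, (k+1 : ℝ) • g x + x = 0 := by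
    intro k
    have hs : Function.Surjective (fun x : E => (k+1 : ℝ) • g x + x) := by
      apply strongMono_surj (finrank ℝ E) E rfl
      · have : Continuous fun x : E => (k+1:ℝ) • g x := hc.const_smul _
        exact this.add continuous_id
      · intro x y
        have h1 : ((k+1:ℝ) • g x + x) - ((k+1:ℝ) • g y + y)
            = (k+1:ℝ) • (g x - g y) + (x - y) := by
          rw [smul_sub]; abel
        rw [h1, inner_add_left, inner_smul_left]
        have h2 := hm x y
        have h3 : ⟪x - y, x - y⟫ = ‖x - y‖ ^ 2 := real_inner_self_eq_norm_sq _
        simp only [RCLike.ofReal_real_eq_id, id_eq, starRingEnd_apply, star_trivial]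
        nlinarith [h2]
    exact hs 0
  choose xs hxs using hsol
  -- g xs k = -(1/(k+1)) • xs k
  have hgx : ∀ k : ℕ, g (xs k) = (-(1/(k+1:ℝ))) • xs k := by
    intro k
    have h := hxs k
    have hk : (0:ℝ) < k + 1 := by positivity
    have h2 : (k+1:ℝ) • g (xs k) = -xs k := eq_neg_of_add_eq_zero_left h
    calc g (xs k) = (1/(k+1:ℝ)) • ((k+1:ℝ) • g (xs k)) := by
          rw [smul_smul]; rw [one_div, inv_mul_cancel₀ (ne_of_gt hk), one_smul]
      _ = (1/(k+1:ℝ)) • (-xs k) := by rw [h2]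
      _ = (-(1/(k+1:ℝ))) • xs k := by rw [smul_neg, neg_smul]
  -- bound
  set B : ℝ := max R 0 with hB
  have hxb : ∀ k : ℕ, ‖xs k‖ ≤ B := by
    intro k
    by_contra hcon
    push_neg at hcon
    have h1 : R ≤ ‖xs k‖ := le_trans (le_max_left _ _) hcon.le
    have h2 := hR (xs k) h1
    rw [hgx k, inner_smul_left] at h2
    simp only [RCLike.ofReal_real_eq_id, id_eq, starRingEnd_apply, star_trivial] at h2
    have h3 : ⟪xs k, xs k⟫ = ‖xs k‖ ^ 2 := real_inner_self_eq_norm_sq _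
    rw [h3] at h2
    have hk : (0:ℝ) < 1/(k+1:ℝ) := by positivity
    have h4 : 0 < ‖xs k‖ := lt_of_le_of_lt (le_max_right _ _) hcon
    nlinarith [mul_pos hk (mul_pos h4 h4)]
  -- compactness
  obtain ⟨a, _, ψ, hψ, hconv⟩ := (ProperSpace.isCompact_closedBall (0:E) B).tendsto_subseq
    (x := xs) (fun k => by rw [Metric.mem_closedBall, dist_zero_right]; exact hxb k)
  refine ⟨a, ?_⟩
  have hga : Filter.Tendsto (fun j => g (xs (ψ j))) Filter.atTop (nhds (g a)) :=
    (hc.continuousAt.tendsto).comp hconv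
  have hto0 : Filter.Tendsto (fun j => g (xs (ψ j))) Filter.atTop (nhds 0) := by
    have hnorm : ∀ j : ℕ, ‖g (xs (ψ j))‖ ≤ (1/(ψ j + 1:ℝ)) * B := by
      intro j
      rw [hgx]
      rw [norm_smul]
      have : ‖(-(1/(ψ j+1:ℝ)))‖ = 1/(ψ j+1:ℝ) := by
        rw [Real.norm_eq_abs, abs_neg, abs_of_pos (by positivity)]
      rw [this]
      have := hxb (ψ j)
      have hpos : (0:ℝ) < 1/(ψ j+1:ℝ) := by positivity
      nlinarith
    rw [tendsto_zero_iff_norm_tendsto_zero]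
    refine squeeze_zero (fun j => norm_nonneg _) hnorm ?_
    have h1 : Filter.Tendsto (fun j : ℕ => (ψ j : ℝ) + 1) Filter.atTop Filter.atTop := by
      apply Filter.tendsto_atTop_add_const_right
      exact tendsto_natCast_atTop_atTop.comp hψ.tendsto_atTop
    have h2 : Filter.Tendsto (fun j : ℕ => 1/((ψ j:ℝ)+1)) Filter.atTop (nhds 0) := by
      simp only [one_div]
      exact h1.inv_tendsto_atTop
    have := h2.mul_const B
    simpa using this
  exact tendsto_nhds_unique hga hto0


set_option maxHeartbeats 1000000 in
theorem demicont {X : Type*} [NormedAddCommGroup X] [NormedSpace ℝ X]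
    (T : X → StrongDual ℝ X)
    (hmono : ∀ u v : X, 0 ≤ T u (u - v) - T v (u - v))
    (hbnd : ∀ r : ℝ, ∃ M : ℝ, ∀ u : X, ‖u‖ ≤ r → ‖T u‖ ≤ M)
    (hhemi : ∀ u v w : X, Continuous (fun t : ℝ => T (u + t • v) w))
    (w : X) : Continuous (fun y => T y w) := by
  rw [continuous_iff_continuousAt]
  intro x
  rw [Metric.continuousAt_iff]
  intro ε hε
  obtain ⟨M, hM⟩ := hbnd (‖x‖ + 1)
  have hM0 : 0 ≤ M := le_trans (norm_nonneg _) (hM x (by linarith [norm_nonneg x]))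
  -- choose t from hemicontinuity (upper bound side)
  have h1 := (hhemi x w w).continuousAt (x := (0:ℝ))
  rw [Metric.continuousAt_iff] at h1
  obtain ⟨δ₁, hδ₁, ht1⟩ := h1 (ε/2) (by linarith)
  set t : ℝ := δ₁ / 2 with htd
  have htpos : 0 < t := by positivity
  have hA : |T (x + t • w) w - T (x + (0:ℝ) • w) w| < ε/2 := by
    have := ht1 (show dist t 0 < δ₁ by
      rw [Real.dist_eq, sub_zero, abs_of_pos htpos]; simp only [htd]; linarith)
    rwa [Real.dist_eq] at this
  rw [zero_smul, add_zero] at hA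
  set A : ℝ := ‖T (x + t • w)‖ with hAdef
  -- lower bound side
  have h2 := (hhemi x (-w) w).continuousAt (x := (0:ℝ))
  rw [Metric.continuousAt_iff] at h2
  obtain ⟨δ₂, hδ₂, ht2⟩ := h2 (ε/2) (by linarith)
  set t' : ℝ := δ₂ / 2 with htd'
  have ht'pos : 0 < t' := by positivity
  have hB : |T (x + t' • (-w)) w - T (x + (0:ℝ) • (-w)) w| < ε/2 := by
    have := ht2 (show dist t' 0 < δ₂ by
      rw [Real.dist_eq, sub_zero, abs_of_pos ht'pos]; simp only [htd']; linarith)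
    rwa [Real.dist_eq] at this
  rw [zero_smul, add_zero] at hB
  set B : ℝ := ‖T (x + t' • (-w))‖ with hBdef
  -- choose δ
  refine ⟨min 1 (min (t * (ε/2) / (M + A + 1)) (t' * (ε/2) / (M + B + 1))),
    lt_min one_pos (lt_min (by positivity) (by positivity)), ?_⟩
  intro y hy
  rw [dist_eq_norm] at hy
  have hy1 : ‖y - x‖ < 1 := lt_of_lt_of_le hy (min_le_left _ _)
  have hy2 : ‖y - x‖ < t * (ε/2) / (M + A + 1) :=
    lt_of_lt_of_le hy ((min_le_right _ _).trans (min_le_left _ _))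
  have hy3 : ‖y - x‖ < t' * (ε/2) / (M + B + 1) :=
    lt_of_lt_of_le hy ((min_le_right _ _).trans (min_le_right _ _))
  have hyn : ‖y‖ ≤ ‖x‖ + 1 := by
    have := norm_sub_norm_le y x
    linarith [le_trans (norm_sub_norm_le y x) hy1.le]
  have hMy : ‖T y‖ ≤ M := hM y hyn
  rw [Real.dist_eq]
  rw [abs_lt]
  have hAnn : 0 ≤ A := norm_nonneg _
  have hBnn : 0 ≤ B := norm_nonneg _
  constructor
  · -- lower bound: T y w > T x w - ε
    have hmon := hmono y (x + t' • (-w))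
    have hd : y - (x + t' • (-w)) = (y - x) + t' • w := by
      rw [smul_neg]; abel
    rw [hd] at hmon
    simp only [map_add, map_sub, map_smul, smul_eq_mul] at hmon
    -- hmon : 0 ≤ T y (y-x) + t' * T y w - (T (x+t'•(-w)) (y-x) + t' * T (x+t'•(-w)) w)
    have e1 : ‖T y (y - x)‖ ≤ M * ‖y - x‖ := by
      refine le_trans (ContinuousLinearMap.le_opNorm _ _) ?_
      exact mul_le_mul_of_nonneg_right hMy (norm_nonneg _)
    have e2 : ‖T (x + t' • (-w)) (y - x)‖ ≤ B * ‖y - x‖ := by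
      refine le_trans (ContinuousLinearMap.le_opNorm _ _) ?_
      exact le_refl _
    rw [Real.norm_eq_abs] at e1 e2
    have e3 : T x w - ε/2 < T (x + t' • (-w)) w := by
      have := abs_lt.mp hB
      linarith [this.1]
    have e4 : (M + B) * ‖y - x‖ < t' * (ε/2) := by
      have hpos : 0 < M + B + 1 := by linarith
      calc (M + B) * ‖y - x‖ ≤ (M + B + 1) * ‖y - x‖ := by nlinarith [norm_nonneg (y - x)]
        _ < t' * (ε/2) := by
            rw [mul_comm]
            exact (lt_div_iff₀ hpos).mp hy3
    have habs1 := abs_le.mp e1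
    have habs2 := abs_le.mp e2
    have hprod := mul_lt_mul_of_pos_left e3 ht'pos
    have q1 := (T y).map_sub y x
    have q2 := (T (x + t' • (-w))).map_sub y x
    have key : t' * (T x w - ε) < t' * T y w := by
      nlinarith [habs1.1, habs1.2, habs2.1, habs2.2]
    have := (mul_lt_mul_iff_right₀ ht'pos).mp key
    linarith
  · -- upper bound: T y w < T x w + ε
    have hmon := hmono y (x + t • w)
    have hd : y - (x + t • w) = (y - x) - t • w := by abel
    rw [hd] at hmon
    simp only [map_add, map_sub, map_smul, smul_eq_mul] at hmon
    have e1 : ‖T y (y - x)‖ ≤ M * ‖y - x‖ := by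
      refine le_trans (ContinuousLinearMap.le_opNorm _ _) ?_
      exact mul_le_mul_of_nonneg_right hMy (norm_nonneg _)
    have e2 : ‖T (x + t • w) (y - x)‖ ≤ A * ‖y - x‖ := by
      refine le_trans (ContinuousLinearMap.le_opNorm _ _) ?_
      exact le_refl _
    rw [Real.norm_eq_abs] at e1 e2
    have e3 : T (x + t • w) w < T x w + ε/2 := by
      have := abs_lt.mp hA
      linarith [this.2]
    have e4 : (M + A) * ‖y - x‖ < t * (ε/2) := by
      have hpos : 0 < M + A + 1 := by linarith
      calc (M + A) * ‖y - x‖ ≤ (M + A + 1) * ‖y - x‖ := by nlinarith [norm_nonneg (y - x)]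
        _ < t * (ε/2) := by
            rw [mul_comm]
            exact (lt_div_iff₀ hpos).mp hy2
    have habs1 := abs_le.mp e1
    have habs2 := abs_le.mp e2
    have hprod := mul_lt_mul_of_pos_left e3 htpos
    have q1 := (T y).map_sub y x
    have q2 := (T (x + t • w)).map_sub y x
    have key : t * T y w < t * (T x w + ε) := by
      nlinarith [habs1.1, habs1.2, habs2.1, habs2.2]
    have := (mul_lt_mul_iff_right₀ htpos).mp key
    linarith


set_option maxHeartbeats 1000000 in
theorem galerkin {X : Type*} [NormedAddCommGroup X] [NormedSpace ℝ X]
    (T : X → StrongDual ℝ X) (b : StrongDual ℝ X)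
    (hmono : ∀ u v : X, 0 ≤ T u (u - v) - T v (u - v))
    (hcoer : ∀ K : ℝ, ∃ R : ℝ, ∀ u : X, R ≤ ‖u‖ → K * ‖u‖ ≤ T u u)
    (hbnd : ∀ r : ℝ, ∃ M : ℝ, ∀ u : X, ‖u‖ ≤ r → ‖T u‖ ≤ M)
    (hhemi : ∀ u v w : X, Continuous (fun t : ℝ => T (u + t • v) w))
    (s : Finset X) :
    ∃ u : X, u ∈ span ℝ (s : Set X) ∧ ∀ v ∈ span ℝ (s : Set X), T u v = b v := by
  classical
  set V : Submodule ℝ X := span ℝ (s : Set X) with hVdef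
  haveI : FiniteDimensional ℝ V := inferInstance
  set n : ℕ := finrank ℝ V with hn
  set E : Type := EuclideanSpace ℝ (Fin n) with hE
  set bV : Basis (Fin n) ℝ V := Module.finBasis ℝ V
  set ℓ : E ≃ₗ[ℝ] V := (EuclideanSpace.equiv (Fin n) ℝ).toLinearEquiv.trans bV.equivFun.symm
    with hℓ
  set ι : E →ₗ[ℝ] X := V.subtype.comp ℓ.toLinearMap with hι
  have hιv : ∀ x : E, ι x = ((ℓ x : V) : X) := fun x => rfl
  have hιmem : ∀ x : E, ι x ∈ V := fun x => (ℓ x).2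
  have hιc : Continuous ι := ι.continuous_of_finiteDimensional
  -- inverse bound
  obtain ⟨c, hcpos, hcb⟩ : ∃ c : ℝ, 0 < c ∧ ∀ x : E, ‖x‖ ≤ c * ‖ι x‖ := by
    set L : V →L[ℝ] E := LinearMap.toContinuousLinearMap (ℓ.symm : V ≃ₗ[ℝ] E).toLinearMap
    refine ⟨‖L‖ + 1, by positivity, ?_⟩
    intro x
    have h1 : ‖L (ℓ x)‖ ≤ ‖L‖ * ‖ℓ x‖ := L.le_opNorm _
    have h2 : L (ℓ x) = x := by
      simp only [L, LinearMap.coe_toContinuousLinearMap', LinearEquiv.coe_coe]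
      exact ℓ.symm_apply_apply x
    have h3 : ‖(ℓ x : V)‖ = ‖ι x‖ := rfl
    rw [h2] at h1
    rw [← h3]
    nlinarith [norm_nonneg (ℓ x : V), norm_nonneg x, norm_nonneg L,
      mul_le_mul_of_nonneg_right (le_refl ‖L‖) (norm_nonneg (ℓ x : V))]
  -- orthonormal basis and g
  set B : OrthonormalBasis (Fin (finrank ℝ E)) ℝ E := stdOrthonormalBasis ℝ E with hB
  set g : E → E := fun x => ∑ i, ((T (ι x) - b) (ι (B i))) • B i with hg
  have hginner : ∀ x y : E, ⟪g x, y⟫ = (T (ι x) - b) (ι y) := by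
    intro x y
    set F : E →ₗ[ℝ] ℝ := ((T (ι x) - b) : X →L[ℝ] ℝ).toLinearMap.comp ι with hF
    have hFa : ∀ z : E, F z = (T (ι x) - b) (ι z) := fun z => rfl
    have h1 : ⟪g x, y⟫ = ∑ i, (F (B i)) * ⟪B i, y⟫ := by
      rw [hg]
      rw [sum_inner]
      congr 1
      funext i
      rw [real_inner_smul_left]
      rfl
    have h2 : F y = ∑ i, (F (B i)) * ⟪B i, y⟫ := by
      conv_lhs => rw [← B.sum_repr' y]
      rw [map_sum]
      congr 1
      funext i
      rw [map_smul]
      simp [smul_eq_mul, mul_comm]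
    rw [h1, ← h2, hFa]
  have hgm : ∀ x y : E, 0 ≤ ⟪g x - g y, x - y⟫ := by
    intro x y
    rw [inner_sub_left, hginner, hginner]
    have h1 : ι (x - y) = ι x - ι y := map_sub ι x y
    rw [h1]
    simp only [ContinuousLinearMap.sub_apply]
    have := hmono (ι x) (ι y)
    linarith
  have hgcoer : ∃ R : ℝ, ∀ x : E, R ≤ ‖x‖ → 0 ≤ ⟪g x, x⟫ := by
    obtain ⟨R, hR⟩ := hcoer ‖b‖
    refine ⟨c * |R|, ?_⟩
    intro x hx
    have h1 : |R| ≤ ‖ι x‖ := by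
      by_contra hcon
      push_neg at hcon
      have := hcb x
      nlinarith [abs_nonneg R, norm_nonneg (ι x)]
    have h2 := hR (ι x) (le_trans (le_abs_self R) h1)
    rw [hginner]
    simp only [ContinuousLinearMap.sub_apply]
    have h3 : b (ι x) ≤ ‖b‖ * ‖ι x‖ := by
      refine le_trans (le_abs_self _) ?_
      rw [← Real.norm_eq_abs]
      exact (b.le_opNorm _)
    linarith
  have hgc : Continuous g := by
    rw [hg]
    apply continuous_finset_sum
    intro i _
    have h1 : Continuous (fun x : E => (T (ι x) - b) (ι (B i))) := by
      simp only [ContinuousLinearMap.sub_apply]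
      exact ((demicont T hmono hbnd hhemi (ι (B i))).comp hιc).sub continuous_const
    exact h1.smul continuous_const
  obtain ⟨x₀, hx₀⟩ := monoCoercive_zero E g hgc hgm hgcoer
  refine ⟨ι x₀, hιmem x₀, ?_⟩
  intro v hv
  obtain ⟨y, hy⟩ : ∃ y : E, ι y = v := ⟨ℓ.symm ⟨v, hv⟩, by
    rw [hιv]; simp⟩
  have := hginner x₀ y
  rw [hx₀] at this
  simp only [inner_zero_left] at this
  rw [hy] at this
  simp only [ContinuousLinearMap.sub_apply] at this
  linarith


/-- Browder–Minty theorem: on a real reflexive Banach space X, a monotone, coercive, bounded,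
hemicontinuous operator T : X → X* is surjective; if T is strictly monotone the solution
to T(u) = b is unique. -/
theorem browder_minty
    (X : Type*) [NormedAddCommGroup X] [NormedSpace ℝ X] [CompleteSpace X]
    (hrefl : Function.Surjective (NormedSpace.inclusionInDoubleDual ℝ X))
    (T : X → StrongDual ℝ X)
    (hmono : ∀ u v : X, 0 ≤ T u (u - v) - T v (u - v))
    (hcoer : ∀ K : ℝ, ∃ R : ℝ, ∀ u : X, R ≤ ‖u‖ → K * ‖u‖ ≤ T u u)
    (hbnd : ∀ r : ℝ, ∃ M : ℝ, ∀ u : X, ‖u‖ ≤ r → ‖T u‖ ≤ M)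
    (hhemi : ∀ u v w : X, Continuous (fun t : ℝ => T (u + t • v) w)) :
    (∀ b : StrongDual ℝ X, ∃ u : X, T u = b) ∧
    ((∀ u v : X, u ≠ v → 0 < T u (u - v) - T v (u - v)) →
      ∀ b : StrongDual ℝ X, ∃! u : X, T u = b) := by
  classical
  have hex : ∀ b : StrongDual ℝ X, ∃ u : X, T u = b := by
    intro b
    obtain ⟨R1, hR1⟩ := hcoer (‖b‖ + 1)
    set C : ℝ := max R1 0 with hC
    -- Galerkin solutions
    have hsol := galerkin T b hmono hcoer hbnd hhemi
    choose uf huf1 huf2 using hsol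
    have hufb : ∀ s : Finset X, ‖uf s‖ ≤ C := by
      intro s
      by_contra hcon
      push_neg at hcon
      have h0 : R1 ≤ ‖uf s‖ := le_trans (le_max_left _ _) hcon.le
      have h1 := hR1 (uf s) h0
      have h2 : T (uf s) (uf s) = b (uf s) := huf2 s (uf s) (huf1 s)
      have h3 : b (uf s) ≤ ‖b‖ * ‖uf s‖ := by
        refine le_trans (le_abs_self _) ?_
        rw [← Real.norm_eq_abs]
        exact b.le_opNorm _
      have h4 : 0 < ‖uf s‖ := lt_of_le_of_lt (le_max_right _ _) hcon
      nlinarith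
    -- pass to the weak-* limit in the double dual
    set J := NormedSpace.inclusionInDoubleDual ℝ X with hJ
    set N : Finset X → WeakDual ℝ (StrongDual ℝ X) :=
      fun s => StrongDual.toWeakDual (J (uf s)) with hN
    set f : Filter (WeakDual ℝ (StrongDual ℝ X)) := Filter.map N Filter.atTop with hf
    haveI : f.NeBot := Filter.map_neBot
    have hJb : ∀ s : Finset X, ‖J (uf s)‖ ≤ C := by
      intro s
      refine le_trans (NormedSpace.double_dual_bound ℝ X (uf s)) ?_
      have h1 := NormedSpace.inclusionInDoubleDual_norm_le ℝ X
      have h2 := hufb s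
      have h3 := norm_nonneg (uf s)
      nlinarith
    have hfS : f ≤ Filter.principal
        (WeakDual.toStrongDual ⁻¹' Metric.closedBall (0 : StrongDual ℝ
          (StrongDual ℝ X)) C) := by
      rw [Filter.le_principal_iff, hf, Filter.mem_map]
      refine Filter.Eventually.of_forall ?_
      intro s
      simp only [Set.mem_preimage, Metric.mem_closedBall, dist_zero_right]
      exact (dist_zero_right (J (uf s))).le.trans (hJb s)
    obtain ⟨ξ, hξmem, hcl⟩ := (WeakDual.isCompact_closedBall
      (0 : StrongDual ℝ (StrongDual ℝ X)) C).exists_clusterPt hfS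
    obtain ⟨u, hu⟩ := hrefl (WeakDual.toStrongDual ξ)
    -- the variational inequality for the limit
    have hkey : ∀ v : X, 0 ≤ (b - T v) (u - v) := by
      intro v
      set φv : StrongDual ℝ X := b - T v with hφv
      set Cset : Set (WeakDual ℝ (StrongDual ℝ X)) := {η | φv v ≤ η φv} with hCset
      have hclosed : IsClosed Cset := isClosed_le continuous_const (WeakDual.eval_continuous φv)
      have hmemf : Cset ∈ f := by
        rw [hf, Filter.mem_map, Filter.mem_atTop_sets]
        refine ⟨{v}, ?_⟩
        intro s hs
        have hvs : v ∈ span ℝ (s : Set X) := by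
          apply Submodule.subset_span
          have : v ∈ s := Finset.singleton_subset_iff.mp hs
          exact this
        simp only [Set.mem_preimage, hCset, Set.mem_setOf_eq, hN]
        have h1 : (StrongDual.toWeakDual (J (uf s))) φv = φv (uf s) :=
          NormedSpace.dual_def ℝ X (uf s) φv
        rw [h1]
        have h2 : φv (uf s) - φv v = φv (uf s - v) := (map_sub φv _ _).symm
        have h3 : uf s - v ∈ span ℝ (s : Set X) := sub_mem (huf1 s) hvs
        have h4 : b (uf s - v) = T (uf s) (uf s - v) := (huf2 s _ h3).symm
        have h5 : φv (uf s - v) = b (uf s - v) - T v (uf s - v) := by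
          rw [hφv]; simp
        have h6 := hmono (uf s) v
        have h7 : φv (uf s - v) = T (uf s) (uf s - v) - T v (uf s - v) := by
          rw [h5, h4]
        have h8 : 0 ≤ φv (uf s - v) := by rw [h7]; exact h6
        linarith [h2.symm ▸ h8, h2]
      have hξC : ξ ∈ Cset := by
        have h1 : ClusterPt ξ (Filter.principal Cset) :=
          hcl.mono (Filter.le_principal_iff.mpr hmemf)
        have h2 := mem_closure_iff_clusterPt.mpr h1
        rwa [hclosed.closure_eq] at h2
      have h3 : ξ φv = φv u := by
        have h4 : (WeakDual.toStrongDual ξ) φv = ξ φv := rfl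
        rw [← h4, ← hu]
        exact NormedSpace.dual_def ℝ X u φv
      have h5 : φv v ≤ φv u := by
        have := hξC
        simp only [hCset, Set.mem_setOf_eq] at this
        rwa [h3] at this
      have h6 : φv (u - v) = φv u - φv v := map_sub φv _ _
      rw [h6]
      linarith
    -- Minty's trick
    refine ⟨u, ?_⟩
    have hw : ∀ w : X, 0 ≤ b w - T u w := by
      intro w
      set ψ : ℝ → ℝ := fun t => b w - T (u + t • (-w)) w with hψdef
      have hψc : Continuous ψ := continuous_const.sub (hhemi u (-w) w)
      have hnonneg : ∀ t ∈ Set.Ioi (0:ℝ), 0 ≤ ψ t := by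
        intro t ht
        rw [Set.mem_Ioi] at ht
        have h1 := hkey (u - t • w)
        have h2 : u - (u - t • w) = t • w := by abel
        rw [h2] at h1
        have h3 : (b - T (u - t • w)) (t • w) = t * ((b - T (u - t • w)) w) := by
          rw [map_smul]; simp [smul_eq_mul]
        rw [h3] at h1
        have h4 : 0 ≤ (b - T (u - t • w)) w := nonneg_of_mul_nonneg_right h1 ht
        have h5 : u + t • (-w) = u - t • w := by
          rw [smul_neg]; abel
        simp only [hψdef, h5]
        simpa using h4
      have hlim : Filter.Tendsto ψ (nhdsWithin 0 (Set.Ioi 0)) (nhds (ψ 0)) :=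
        (hψc.continuousAt).mono_left nhdsWithin_le_nhds
      have h6 : 0 ≤ ψ 0 :=
        ge_of_tendsto hlim (Filter.eventually_iff_exists_mem.mpr
          ⟨Set.Ioi 0, self_mem_nhdsWithin, hnonneg⟩)
      simpa [hψdef] using h6
    ext w
    have h1 := hw w
    have h2 := hw (-w)
    simp only [map_neg] at h2
    linarith
  refine ⟨hex, ?_⟩
  intro hstrict b
  obtain ⟨u, hu⟩ := hex b
  refine ⟨u, hu, ?_⟩
  intro y hy
  by_contra hne
  have h1 := hstrict y u hne
  rw [hy, hu] at h1
  simp at h1
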